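/- Fix N ∈ ℕ and phases α_0, …, α_N with 0 < α_k < π/2 for all k. There exist frequencies ω_0, …, ω_N ∈ [0, 2π] such that the (N+1)×(N+1) matrix M with entries M_{l,k} = ω_k^l · sin(α_k + lπ/2) (rows indexed by l = 0,…,N, columns by k = 0,…,N) has nonzero determinant. -/

import Mathlib

open Real

private lemma sin_shift_ne_zero {a : ℝ} (ha0 : 0 < a) (ha : a < π / 2) :
    ∀ n : ℕ, Real.sin (a + n * π / 2) ≠ 0 := by
  have key : ∀ n : ℕ, Real.sin (a + n * π / 2) ≠ 0 ∧ Real.cos (a + n * π / 2) ≠ 0 := by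
    intro n
    induction n with
    | zero =>
      simp only [Nat.cast_zero, zero_mul, zero_div, add_zero]
      exact ⟨(Real.sin_pos_of_pos_of_lt_pi ha0 (by linarith [pi_pos])).ne',
        (Real.cos_pos_of_mem_Ioo ⟨by linarith [pi_pos], ha⟩).ne'⟩
    | succ n ih =>
      have h : a + ((n : ℕ) + 1 : ℕ) * π / 2 = (a + n * π / 2) + π / 2 := by
        push_cast; ring
      rw [h, Real.sin_add_pi_div_two, Real.cos_add_pi_div_two]
      exact ⟨ih.2, neg_ne_zero.mpr ih.1⟩
  exact fun n => (key n).1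

private lemma digits_inj (B : ℕ) (hB : 0 < B) :
    ∀ n (f g : ℕ → ℕ), (∀ i, i < n → f i < B) → (∀ i, i < n → g i < B) →
    (∑ i ∈ Finset.range n, B ^ i * f i) = (∑ i ∈ Finset.range n, B ^ i * g i) →
    ∀ i, i < n → f i = g i := by
  intro n
  induction n with
  | zero => intro f g _ _ _ i hi; omega
  | succ n ih =>
    intro f g hf hg h i hi
    rw [Finset.sum_range_succ', Finset.sum_range_succ'] at h
    have hrw : ∀ u : ℕ → ℕ, (∑ i ∈ Finset.range n, B ^ (i + 1) * u (i + 1))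
        = (∑ i ∈ Finset.range n, B ^ i * u (i + 1)) * B := by
      intro u
      rw [Finset.sum_mul]
      exact Finset.sum_congr rfl fun i _ => by ring
    rw [hrw f, hrw g] at h
    simp only [pow_zero, one_mul] at h
    set Sf := ∑ i ∈ Finset.range n, B ^ i * f (i + 1) with hSf
    set Sg := ∑ i ∈ Finset.range n, B ^ i * g (i + 1) with hSg
    have h0 : f 0 = g 0 := by
      have h' := congrArg (· % B) h
      simp only [add_comm, Nat.add_mul_mod_self_right] at h'
      rwa [Nat.mod_eq_of_lt (hf 0 (by omega)), Nat.mod_eq_of_lt (hg 0 (by omega))] at h'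
    have hS : Sf = Sg := by
      have : Sf * B = Sg * B := by omega
      exact Nat.eq_of_mul_eq_mul_right hB this
    have htail := ih (fun i => f (i + 1)) (fun i => g (i + 1))
      (fun i hi => hf (i + 1) (by omega)) (fun i hi => hg (i + 1) (by omega)) hS
    rcases i with _ | j
    · exact h0
    · exact htail j (by omega)

open Polynomial in
/-- Frequencies in `[0, 2π]` can be chosen so that the generalized Vandermonde-type
matrix `M_{l,k} = ω_k^l sin (α_k + l π / 2)` is invertible. -/
theorem exists_freq_det_ne_zero (N : ℕ) (α : ℕ → ℝ)
    (hα : ∀ k ≤ N, α k ∈ Set.Ioo (0:ℝ) (π / 2)) :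
    ∃ ω : ℕ → ℝ, (∀ k ≤ N, ω k ∈ Set.Icc (0:ℝ) (2 * π)) ∧
      (Matrix.of fun l k : Fin (N + 1) =>
        (ω k) ^ (l : ℕ) * Real.sin (α k + (l : ℕ) * π / 2)).det ≠ 0 := by
  set B : ℕ := N + 2 with hB
  set P : ℝ[X] := (Matrix.of fun l k : Fin (N + 1) =>
      C (Real.sin (α k + (l : ℕ) * π / 2)) * X ^ (B ^ (k : ℕ) * (l : ℕ))).det with hP
  set E : ℕ := ∑ i : Fin (N + 1), B ^ (i : ℕ) * (i : ℕ) with hE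
  -- exponents determine the permutation
  have hinj : ∀ σ : Equiv.Perm (Fin (N + 1)),
      (∑ i : Fin (N + 1), B ^ (i : ℕ) * ((σ i : Fin (N+1)) : ℕ)) = E → σ = 1 := by
    intro σ hσ
    have hfg : ∀ i, i < N + 1 →
        (fun m => if h : m < N + 1 then ((σ ⟨m, h⟩ : Fin (N+1)) : ℕ) else 0) i
          = (fun m => m) i := by
      apply digits_inj B (by omega)
      · intro i hi
        have := (σ ⟨i, hi⟩).is_lt
        simp only [dif_pos hi]
        omega
      · intro i hi; omega
      · rw [← Fin.sum_univ_eq_sum_range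
            (fun m => B ^ m * if h : m < N + 1 then ((σ ⟨m, h⟩ : Fin (N+1)) : ℕ) else 0) (N+1),
            ← Fin.sum_univ_eq_sum_range (fun m => B ^ m * m) (N+1)]
        rw [hE] at hσ
        rw [← hσ]
        apply Finset.sum_congr rfl
        intro i _
        simp [Fin.is_lt i]
    ext i
    have h := hfg (i : ℕ) i.is_lt
    simpa [Fin.is_lt i] using h
  -- the coefficient of `P` at `E` is nonzero
  have hcoeff : P.coeff E ≠ 0 := by
    rw [hP, Matrix.det_apply, finset_sum_coeff]
    have hterm : ∀ σ : Equiv.Perm (Fin (N + 1)),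
        ((Equiv.Perm.sign σ) • ∏ i : Fin (N+1),
          (Matrix.of fun l k : Fin (N + 1) =>
            C (Real.sin (α k + (l : ℕ) * π / 2)) * X ^ (B ^ (k : ℕ) * (l : ℕ))) (σ i) i).coeff E
        = (Equiv.Perm.sign σ) •
            ((∏ i : Fin (N+1), Real.sin (α i + ((σ i : Fin (N+1)) : ℕ) * π / 2))
            * if E = ∑ i : Fin (N+1), B ^ (i : ℕ) * ((σ i : Fin (N+1)) : ℕ) then 1 else 0) := by
      intro σ
      rw [coeff_smul]
      congr 1
      simp only [Matrix.of_apply]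
      rw [Finset.prod_mul_distrib, ← map_prod, Finset.prod_pow_eq_pow_sum,
        coeff_C_mul, coeff_X_pow]
    rw [Finset.sum_congr rfl (fun σ _ => hterm σ)]
    rw [Finset.sum_eq_single (1 : Equiv.Perm (Fin (N+1)))]
    · simp only [Equiv.Perm.sign_one, Equiv.Perm.one_apply, one_smul]
      show (∏ i : Fin (N+1), Real.sin (α i + ((i : Fin (N+1)) : ℕ) * π / 2)) *
        (if E = ∑ i : Fin (N+1), B ^ (i : ℕ) * (i : ℕ) then (1:ℝ) else 0) ≠ 0
      rw [if_pos hE, mul_one]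
      rw [Finset.prod_ne_zero_iff]
      intro k _
      exact sin_shift_ne_zero (hα k (by omega)).1 (hα k (by omega)).2 k
    · intro σ _ hσ
      rw [if_neg, mul_zero, smul_zero]
      intro hcontra
      exact hσ (hinj σ hcontra.symm)
    · intro h; exact absurd (Finset.mem_univ _) h
  have hPne : P ≠ 0 := fun h => hcoeff (by simp [h])
  -- choose `t ∈ (0, 1]` which is not a root
  obtain ⟨t, ht⟩ := ((Set.Ioc_infinite (show (0:ℝ) < 1 by norm_num)).diff
    (Polynomial.finite_setOf_isRoot hPne)).nonempty
  obtain ⟨⟨ht0, ht1⟩, htroot⟩ := ht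
  refine ⟨fun k => t ^ (B ^ k), ?_, ?_⟩
  · intro k _
    constructor
    · positivity
    · have h1 : t ^ (B ^ k) ≤ 1 := pow_le_one₀ ht0.le ht1
      have h2 := pi_gt_three
      linarith
  · have hev : (Matrix.of fun l k : Fin (N + 1) =>
        (t ^ (B ^ (k : ℕ))) ^ (l : ℕ) * Real.sin (α k + (l : ℕ) * π / 2)).det = P.eval t := by
      rw [hP]
      rw [show P.eval t = (Polynomial.evalRingHom t) P from rfl, hP,
        RingHom.map_det]
      congr 1
      ext l k
      simp only [RingHom.mapMatrix_apply, Matrix.map_apply, Matrix.of_apply,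
        coe_evalRingHom, eval_mul, eval_C, eval_pow, eval_X, ← pow_mul]
      ring
    rw [hev]
    exact htroot
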